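/- Let r ≥ 1 and let G be a (multi)graph. For every r-edge-coloring of G, the vertex set of G can be covered by at most r·α(G) monochromatic connected subgraphs, i.e., tc_r(G) ≤ r·α(G). -/

import Mathlib

open SimpleGraph

/-- The subgraph of `G` consisting of edges of color `i` under edge-coloring `c`. -/
def monoSub {V : Type*} (G : SimpleGraph V) {r : ℕ} (c : Sym2 V → Fin r) (i : Fin r) :
    SimpleGraph V where
  Adj u v := G.Adj u v ∧ c s(u, v) = i
  symm := ⟨fun u v h => ⟨h.1.symm, by rw [Sym2.eq_swap]; exact h.2⟩⟩
  loopless := ⟨fun u h => G.loopless.irrefl u h.1⟩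

/-- `V(G)` can be covered by at most `s` monochromatic connected subgraphs. -/
def HasMonoCover {V : Type*} (G : SimpleGraph V) {r : ℕ} (c : Sym2 V → Fin r) (s : ℕ) : Prop :=
  ∃ t : ℕ, t ≤ s ∧ ∃ (f : Fin t → Set V) (col : Fin t → Fin r),
    (∀ j, ((monoSub G c (col j)).induce (f j)).Connected) ∧ (⋃ j, f j) = Set.univ

/-- `V(G)` can be partitioned into at most `s` monochromatic connected subgraphs. -/
def HasMonoPartition {V : Type*} (G : SimpleGraph V) {r : ℕ} (c : Sym2 V → Fin r) (s : ℕ) : Prop :=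
  ∃ t : ℕ, t ≤ s ∧ ∃ (f : Fin t → Set V) (col : Fin t → Fin r),
    (∀ j, ((monoSub G c (col j)).induce (f j)).Connected) ∧ (⋃ j, f j) = Set.univ ∧
    ∀ j j', j ≠ j' → Disjoint (f j) (f j')

/-- The independence number of `G`. -/
noncomputable def indepNum' {V : Type*} (G : SimpleGraph V) : ℕ :=
  sSup {k | ∃ s : Finset V, s.card = k ∧ ∀ u ∈ s, ∀ v ∈ s, u ≠ v → ¬ G.Adj u v}

/-- The induced graph on a connected component is connected. -/
lemma connected_induce_supp {V : Type*} (H : SimpleGraph V) (C : H.ConnectedComponent) :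
    (H.induce C.supp).Connected := by
  obtain ⟨v, hv⟩ := C.exists_rep
  subst hv
  have key : ∀ {a b : V} (p : H.Walk a b) (ha : a ∈ (H.connectedComponentMk v).supp)
      (hb : b ∈ (H.connectedComponentMk v).supp),
      (H.induce (H.connectedComponentMk v).supp).Reachable ⟨a, ha⟩ ⟨b, hb⟩ := by
    intro a b p
    induction p with
    | nil => intro ha hb; rfl
    | cons hadj q ih =>
      rename_i x y z
      intro ha hb
      have hy : y ∈ (H.connectedComponentMk v).supp := by
        simp only [ConnectedComponent.mem_supp_iff] at ha ⊢
        rw [← ha]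
        exact ConnectedComponent.sound hadj.symm.reachable
      have hadj' : (H.induce (H.connectedComponentMk v).supp).Adj ⟨x, ha⟩ ⟨y, hy⟩ := by
        simpa [comap_adj] using hadj
      exact hadj'.reachable.trans (ih hy hb)
  rw [connected_iff]
  constructor
  · rintro ⟨a, ha⟩ ⟨b, hb⟩
    have hab : H.Reachable a b := by
      obtain ⟨ha, hb⟩ := And.intro ((ConnectedComponent.mem_supp_iff _ _).mp ha) ((ConnectedComponent.mem_supp_iff _ _).mp hb)
      exact (ConnectedComponent.exact (ha.trans hb.symm))
    obtain ⟨p⟩ := hab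
    exact key p ha hb
  · exact ⟨⟨v, rfl⟩⟩

/-- For every r-edge-coloring, V(G) can be covered by at most r·α(G) monochromatic
connected subgraphs. -/
theorem stmt2 {V : Type*} [Fintype V] (r : ℕ) (hr : 1 ≤ r) (G : SimpleGraph V)
    (c : Sym2 V → Fin r) :
    HasMonoCover G c (r * indepNum' G) := by
  classical
  set S : Set ℕ := {k | ∃ s : Finset V, s.card = k ∧ ∀ u ∈ s, ∀ v ∈ s, u ≠ v → ¬ G.Adj u v}
    with hS
  have hne : S.Nonempty := ⟨0, ∅, by simp⟩
  have hbdd : BddAbove S := by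
    refine ⟨Fintype.card V, ?_⟩
    rintro k ⟨s, hcard, -⟩
    exact hcard ▸ s.card_le_univ
  have hmem : indepNum' G ∈ S := Nat.sSup_mem hne hbdd
  obtain ⟨s, hcard, hindep⟩ := hmem
  -- maximality: every vertex is in s or adjacent to a vertex of s
  have hmax : ∀ u : V, u ∈ s ∨ ∃ v ∈ s, G.Adj u v := by
    intro u
    by_contra h
    push_neg at h
    obtain ⟨hus, hnadj⟩ := h
    have hmem2 : s.card + 1 ∈ S := by
      refine ⟨insert u s, by rw [Finset.card_insert_of_notMem hus], ?_⟩
      intro a ha b hb hab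
      rcases Finset.mem_insert.mp ha with rfl | ha'
      · rcases Finset.mem_insert.mp hb with rfl | hb'
        · exact absurd rfl hab
        · exact hnadj b hb'
      · rcases Finset.mem_insert.mp hb with rfl | hb'
        · intro hadj; exact hnadj a ha' hadj.symm
        · exact hindep a ha' b hb' hab
    have := le_csSup hbdd hmem2
    rw [← indepNum'] at this
    omega
  rcases eq_or_ne s.card 0 with h0 | h0
  · -- s empty, so V empty
    refine ⟨0, Nat.zero_le _, Fin.elim0, Fin.elim0, fun j => j.elim0, ?_⟩
    rw [Set.eq_univ_iff_forall]
    intro u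
    rcases hmax u with hu | ⟨v, hv, -⟩
    · exact absurd (Finset.card_eq_zero.mp h0 ▸ hu) (Finset.notMem_empty u)
    · exact absurd (Finset.card_eq_zero.mp h0 ▸ hv) (Finset.notMem_empty v)
  · refine ⟨r * s.card, by rw [hcard], ?_⟩
    set e : Fin r × Fin s.card ≃ Fin (r * s.card) := finProdFinEquiv
    set vtx : Fin s.card → V := fun k => (s.equivFin.symm k : V) with hvtx
    refine ⟨fun j => ((monoSub G c (e.symm j).1).connectedComponentMk (vtx (e.symm j).2)).supp,
      fun j => (e.symm j).1, fun j => connected_induce_supp _ _, ?_⟩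
    rw [Set.eq_univ_iff_forall]
    intro u
    simp only [Set.mem_iUnion]
    rcases hmax u with hu | ⟨v, hv, hadj⟩
    · refine ⟨e (⟨0, hr⟩, s.equivFin ⟨u, hu⟩), ?_⟩
      simp only [Equiv.symm_apply_apply, hvtx, Equiv.symm_apply_apply,
        ConnectedComponent.mem_supp_iff]
    · set i := c s(u, v) with hi
      refine ⟨e (i, s.equivFin ⟨v, hv⟩), ?_⟩
      rw [Equiv.symm_apply_apply]
      have hv' : vtx (s.equivFin ⟨v, hv⟩) = v := by simp [hvtx]
      rw [hv']
      exact ConnectedComponent.mem_supp_iff _ _ |>.mpr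
        (ConnectedComponent.sound (SimpleGraph.Adj.reachable (show (monoSub G c i).Adj u v from ⟨hadj, hi.symm⟩)))
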